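/- Let R be a Cohen–Macaulay (Noetherian) local ring and let a, b be a regular sequence in R, with J = (a, b). Then for every n ≥ 1 there is an isomorphism of R-modules J^{n-1}/(J^{n-1}·\bar{J}) ≅ (R/\bar{J})^n, where \bar{J} is the integral closure of J. -/

import Mathlib

universe u

/-- An element `x` of `R` is integral over an ideal `I` if it satisfies an equation
`x ^ n + a 1 * x ^ (n - 1) + ⋯ + a n = 0` with `a i ∈ I ^ i`. -/
def Ideal.IsIntegralElement {R : Type*} [CommRing R] (I : Ideal R) (x : R) : Prop :=
  ∃ n : ℕ, 0 < n ∧ ∃ a : ℕ → R,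
    (∀ i ∈ Finset.Icc 1 n, a i ∈ I ^ i) ∧
    x ^ n + ∑ i ∈ Finset.Icc 1 n, a i * x ^ (n - i) = 0

/-- An ideal is integrally closed if every element integral over it belongs to it. -/
def Ideal.IsIntegrallyClosedIdeal {R : Type*} [CommRing R] (I : Ideal R) : Prop :=
  ∀ x : R, I.IsIntegralElement x → x ∈ I

/-- The integral closure of an ideal, as an ideal. -/
noncomputable def Ideal.integralClosureIdeal {R : Type*} [CommRing R] (I : Ideal R) : Ideal R :=
  Ideal.span {x | I.IsIntegralElement x}

/-- A Noetherian local ring is Cohen--Macaulay if it admits a regular sequence of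
nonunits whose length equals its Krull dimension (i.e. depth = dimension). -/
def IsCohenMacaulayLocalRing (R : Type*) [CommRing R] : Prop :=
  IsLocalRing R ∧ IsNoetherianRing R ∧
    ∃ rs : List R, (∀ r ∈ rs, ¬IsUnit r) ∧ RingTheory.Sequence.IsRegular R rs ∧
      (rs.length : WithBot ℕ∞) = ringKrullDim R

section Aux

variable {R : Type*} [CommRing R]

/-- Every element of an ideal is integral over it. -/
lemma mem_integralClosureIdeal_of_mem (I : Ideal R) {x : R} (hx : x ∈ I) :
    x ∈ I.integralClosureIdeal := by
  refine Ideal.subset_span ⟨1, one_pos, fun _ => -x, ?_, ?_⟩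
  · intro i hi
    simp only [Finset.mem_Icc] at hi
    obtain rfl : i = 1 := le_antisymm hi.2 hi.1
    simpa using I.neg_mem hx
  · simp

/-- Monomials `a^i b^j` lie in `(a,b)^(i+j)`. -/
lemma mono_mem_pow (a b : R) (i j : ℕ) :
    a ^ i * b ^ j ∈ Ideal.span {a, b} ^ (i + j) := by
  rw [pow_add]
  exact Ideal.mul_mem_mul
    (Ideal.pow_mem_pow (Ideal.subset_span (by simp)) i)
    (Ideal.pow_mem_pow (Ideal.subset_span (by simp)) j)

/-- `(a,b)^m` is spanned by the monomials of degree `m`. -/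
lemma pow_le_span_monos (a b : R) (m : ℕ) :
    Ideal.span {a, b} ^ m ≤
      Ideal.span (Set.range fun i : Fin (m + 1) => a ^ (i : ℕ) * b ^ (m - (i : ℕ))) := by
  induction m with
  | zero =>
    intro x _
    have h1 : (1 : R) ∈ Ideal.span
        (Set.range fun i : Fin 1 => a ^ (i : ℕ) * b ^ (0 - (i : ℕ))) :=
      Ideal.subset_span ⟨0, by simp⟩
    simpa using Ideal.mul_mem_left _ x h1
  | succ m ih =>
    have h1 : Ideal.span ({a, b} : Set R) ^ (m + 1)
        = Ideal.span {a, b} * Ideal.span {a, b} ^ m := by ring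
    rw [h1]
    refine le_trans (Ideal.mul_mono_right ih) ?_
    rw [Ideal.span_mul_span']
    rw [Ideal.span_le]
    rintro z hz
    rw [Set.mem_mul] at hz
    obtain ⟨x, hx, y, hy, rfl⟩ := hz
    obtain ⟨i, rfl⟩ := hy
    rcases hx with rfl | rfl
    · refine Ideal.subset_span ⟨⟨(i : ℕ) + 1, by omega⟩, ?_⟩
      have : m + 1 - ((i : ℕ) + 1) = m - (i : ℕ) := by omega
      simp only [this]
      ring
    · refine Ideal.subset_span ⟨⟨(i : ℕ), by omega⟩, ?_⟩
      have hile : (i : ℕ) ≤ m := Nat.lt_succ_iff.mp i.isLt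
      have : m + 1 - (i : ℕ) = (m - (i : ℕ)) + 1 := by omega
      simp only [this]
      ring

lemma bpow_span {a b : R} (hb : ∀ x : R, b * x ∈ Ideal.span {a} → x ∈ Ideal.span {a}) :
    ∀ (k : ℕ) (x : R), b ^ k * x ∈ Ideal.span {a} → x ∈ Ideal.span {a} := by
  intro k
  induction k with
  | zero => intro x hx; simpa using hx
  | succ k ih =>
    intro x hx
    have : b ^ k * (b * x) ∈ Ideal.span {a} := by
      have : b ^ k * (b * x) = b ^ (k + 1) * x := by ring
      rw [this]; exact hx
    exact hb x (ih _ this)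

/-- Quasi-regularity: a homogeneous form of degree `m` vanishing at a regular
sequence `(a, b)` has all its coefficients in `(a, b)`. -/
lemma quasireg {a b : R} (ha : ∀ x : R, a * x = 0 → x = 0)
    (hb : ∀ x : R, b * x ∈ Ideal.span {a} → x ∈ Ideal.span {a}) :
    ∀ (m : ℕ) (c : ℕ → R),
      (∑ i ∈ Finset.range (m + 1), c i * (a ^ i * b ^ (m - i))) = 0 →
      ∀ i ≤ m, c i ∈ Ideal.span ({a, b} : Set R) := by
  intro m
  induction m with
  | zero =>
    intro c hc i hi
    interval_cases i
    have : c 0 = 0 := by simpa using hc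
    rw [this]; exact zero_mem _
  | succ m ih =>
    intro c hc i hi
    -- peel off the i = 0 term
    rw [Finset.sum_range_succ'] at hc
    -- c 0 * b^(m+1) ∈ (a)
    have hc0span : b ^ (m + 1) * c 0 ∈ Ideal.span ({a} : Set R) := by
      have hrest : ∑ i ∈ Finset.range (m + 1),
          c (i + 1) * (a ^ (i + 1) * b ^ (m + 1 - (i + 1))) ∈ Ideal.span ({a} : Set R) := by
        refine Submodule.sum_mem _ fun j _ => ?_
        exact Ideal.mem_span_singleton.mpr ⟨c (j + 1) * (a ^ j * b ^ (m + 1 - (j + 1))), by ring⟩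
      have h0 : c 0 * (a ^ 0 * b ^ (m + 1 - 0)) =
          - ∑ i ∈ Finset.range (m + 1), c (i + 1) * (a ^ (i + 1) * b ^ (m + 1 - (i + 1))) :=
        eq_neg_of_add_eq_zero_right hc
      have hmem0 : c 0 * (a ^ 0 * b ^ (m + 1 - 0)) ∈ Ideal.span ({a} : Set R) := by
        rw [h0]; exact Submodule.neg_mem _ hrest
      have heq : b ^ (m + 1) * c 0 = c 0 * (a ^ 0 * b ^ (m + 1 - 0)) := by
        simp only [Nat.sub_zero, pow_zero]; ring
      rw [heq]; exact hmem0
    obtain ⟨f, hf⟩ := Ideal.mem_span_singleton.mp (bpow_span hb (m + 1) (c 0) hc0span)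
    -- cancel a
    set c' : ℕ → R := fun j => if j = 0 then f * b + c 1 else c (j + 1) with hc'
    rw [Finset.sum_range_succ'
      (fun k => c (k + 1) * (a ^ (k + 1) * b ^ (m + 1 - (k + 1)))) m] at hc
    have hs : a * (∑ j ∈ Finset.range (m + 1), c' j * (a ^ j * b ^ (m - j))) = 0 := by
      rw [Finset.mul_sum, Finset.sum_range_succ']
      have e1 : ∀ j ∈ Finset.range m, a * (c' (j + 1) * (a ^ (j + 1) * b ^ (m - (j + 1))))
          = c (j + 1 + 1) * (a ^ (j + 1 + 1) * b ^ (m + 1 - (j + 1 + 1))) := by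
        intro j hj
        have h2 : m + 1 - (j + 1 + 1) = m - (j + 1) := by omega
        have h3 : c' (j + 1) = c (j + 1 + 1) := by
          simp only [hc', if_neg (Nat.succ_ne_zero j)]
        rw [h2, h3]
        ring
      have e0 : a * (c' 0 * (a ^ 0 * b ^ (m - 0)))
          = c (0 + 1) * (a ^ (0 + 1) * b ^ (m + 1 - (0 + 1))) + c 0 * (a ^ 0 * b ^ (m + 1 - 0)) := by
        have h4 : c' 0 = f * b + c 1 := by simp only [hc', if_pos rfl]
        have h5 : m + 1 - (0 + 1) = m := by omega
        have h6 : m + 1 - 0 = m + 1 := by omega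
        rw [h4, h5, h6, hf]
        simp only [Nat.sub_zero, pow_zero, pow_one]
        ring
      rw [Finset.sum_congr rfl e1, e0, ← add_assoc]
      exact hc
    have hsum0 : ∑ j ∈ Finset.range (m + 1), c' j * (a ^ j * b ^ (m - j)) = 0 :=
      ha _ hs
    have hmem := ih c' hsum0
    have haJ : a ∈ Ideal.span ({a, b} : Set R) := Ideal.subset_span (by simp)
    have hbJ : b ∈ Ideal.span ({a, b} : Set R) := Ideal.subset_span (by simp)
    rcases i with _ | i
    · rw [hf]; exact Ideal.mul_mem_right f _ haJ
    rcases i with _ | i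
    · have h0 := hmem 0 (Nat.zero_le m)
      have : c 1 = c' 0 - f * b := by simp [hc']
      rw [this]
      exact Submodule.sub_mem _ h0 (Ideal.mul_mem_left _ f hbJ)
    · have h := hmem (i + 1) (by omega)
      simpa [hc'] using h

/-- The key isomorphism, with the regularity hypotheses made explicit. -/
lemma aux_iso (a b : R)
    (ha : ∀ x : R, a * x = 0 → x = 0)
    (hb : ∀ x : R, b * x ∈ Ideal.span {a} → x ∈ Ideal.span {a})
    (Ibar : Ideal R) (hJIbar : Ideal.span ({a, b} : Set R) ≤ Ibar) (m : ℕ) :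
    Nonempty
      ((Submodule.map
          (Submodule.mkQ ((Ideal.span {a, b} ^ m * Ibar : Ideal R) : Submodule R R))
          ((Ideal.span {a, b} ^ m : Ideal R) : Submodule R R)) ≃ₗ[R]
        (Fin (m + 1) → R ⧸ Ibar)) := by
  set J : Ideal R := Ideal.span {a, b} with hJdef
  set N : Ideal R := J ^ m * Ibar with hNdef
  set mono : Fin (m + 1) → R := fun i => a ^ (i : ℕ) * b ^ (m - (i : ℕ)) with hmono
  have hmono_mem : ∀ i : Fin (m + 1), mono i ∈ J ^ m := by
    intro i
    have hile : (i : ℕ) ≤ m := Nat.lt_succ_iff.mp i.isLt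
    have : (i : ℕ) + (m - (i : ℕ)) = m := by omega
    simpa [hmono, this] using mono_mem_pow a b (i : ℕ) (m - (i : ℕ))
  set L : (Fin (m + 1) → R) →ₗ[R] R :=
    { toFun := fun c => ∑ i, c i * mono i
      map_add' := fun x y => by
        simp [add_mul, Finset.sum_add_distrib]
      map_smul' := fun r x => by
        simp [Finset.mul_sum, mul_assoc] } with hL
  have hLapply : ∀ c, L c = ∑ i, c i * mono i := fun _ => rfl
  have hrangeL : LinearMap.range L = (↑(J ^ m) : Submodule R R) := by
    apply le_antisymm
    · rintro _ ⟨c, rfl⟩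
      rw [hLapply]
      exact Submodule.sum_mem _ fun i _ => Ideal.mul_mem_left _ _ (hmono_mem i)
    · intro x hx
      have hx' := pow_le_span_monos a b m hx
      obtain ⟨c, hc⟩ := (Submodule.mem_span_range_iff_exists_fun R).mp hx'
      exact ⟨c, by simpa [hLapply, smul_eq_mul] using hc⟩
  set ψ : (Fin (m + 1) → R) →ₗ[R] R ⧸ (N : Submodule R R) :=
    (Submodule.mkQ (N : Submodule R R)).comp L with hψ
  have hkerψ : LinearMap.ker ψ
      = Submodule.pi Set.univ (fun _ : Fin (m + 1) => (Ibar : Submodule R R)) := by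
    have hNle : (↑N : Submodule R R) ≤ Submodule.map L
        (Submodule.pi Set.univ (fun _ : Fin (m + 1) => (Ibar : Submodule R R))) := by
      rw [hNdef]
      refine Ideal.mul_le.mpr fun x hx y hy => ?_
      have : x ∈ LinearMap.range L := hrangeL.symm ▸ hx
      obtain ⟨d, rfl⟩ := this
      refine ⟨fun i => y * d i, ?_, ?_⟩
      · intro i _
        exact Ideal.mul_mem_right (d i) Ibar hy
      · simp only [hLapply, Finset.mul_sum]
        rw [Finset.sum_mul]
        refine Finset.sum_congr rfl fun i _ => by ring
    apply le_antisymm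
    · intro c hc
      rw [LinearMap.mem_ker, hψ, LinearMap.comp_apply, Submodule.mkQ_apply,
        Submodule.Quotient.mk_eq_zero] at hc
      obtain ⟨d, hd, hLd⟩ := hNle hc
      have h0 : L (c - d) = 0 := by rw [map_sub, hLd, sub_self]
      rw [hLapply] at h0
      set c' : ℕ → R := fun k =>
        if h : k < m + 1 then (c - d) ⟨k, h⟩ else 0 with hc'
      have hsum : ∑ k ∈ Finset.range (m + 1), c' k * (a ^ k * b ^ (m - k)) = 0 := by
        rw [Finset.sum_range fun k => c' k * (a ^ k * b ^ (m - k))]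
        rw [← h0]
        refine Finset.sum_congr rfl fun i _ => ?_
        simp [hc', i.isLt, hmono, Nat.lt_succ_iff.mp i.isLt, Nat.not_lt.mpr (Nat.lt_succ_iff.mp i.isLt)]
      have hcoef := quasireg ha hb m c' hsum
      intro i _
      have hile : (i : ℕ) ≤ m := Nat.lt_succ_iff.mp i.isLt
      have h1 : c' (i : ℕ) ∈ J := hcoef (i : ℕ) hile
      have h2 : c i - d i ∈ Ibar := by
        apply hJIbar
        simpa [hc', i.isLt, hile] using h1
      have := Submodule.add_mem Ibar h2 (hd i (Set.mem_univ i))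
      simpa using this
    · intro c hc
      rw [LinearMap.mem_ker, hψ, LinearMap.comp_apply, Submodule.mkQ_apply,
        Submodule.Quotient.mk_eq_zero, hLapply]
      refine Submodule.sum_mem _ fun i _ => ?_
      have : mono i * c i ∈ N := Ideal.mul_mem_mul (hmono_mem i) (hc i (Set.mem_univ i))
      rwa [mul_comm] at this
  have hrangeψ : Submodule.map (Submodule.mkQ (N : Submodule R R))
      (↑(J ^ m) : Submodule R R) = LinearMap.range ψ := by
    rw [hψ, LinearMap.range_comp, hrangeL]
  exact ⟨(LinearEquiv.ofEq _ _ hrangeψ).trans <|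
    (LinearMap.quotKerEquivRange ψ).symm.trans <|
    (Submodule.quotEquivOfEq _ _ hkerψ).trans <|
    Submodule.quotientPi _⟩

end Aux

open Pointwise

/-- **Claim (within Theorem 4.1).** Let `R` be a Cohen–Macaulay Noetherian local ring,
`a, b` a regular sequence, `J = (a, b)`. For every `n ≥ 1`,
`J^{n-1} / (J^{n-1} ī) ≅ (R ⧸ ī)^n` as `R`-modules, where `ī` is the integral closure
of `J`. Here `J^{n-1} / (J^{n-1} ī)` is realized as the image of `J^{n-1}` in
`R ⧸ (J^{n-1} ī)`. -/
theorem power_quotient_iso_of_complete_intersection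
    {R : Type*} [CommRing R] [IsLocalRing R] [IsNoetherianRing R]
    (hCM : IsCohenMacaulayLocalRing R)
    (a b : R) (hreg : RingTheory.Sequence.IsRegular R [a, b])
    (J : Ideal R) (hJ : J = Ideal.span {a, b}) :
    ∀ n : ℕ, 1 ≤ n →
      Nonempty
        ((Submodule.map
            (Submodule.mkQ ((J ^ (n - 1) * J.integralClosureIdeal : Ideal R) : Submodule R R))
            ((J ^ (n - 1) : Ideal R) : Submodule R R)) ≃ₗ[R]
          (Fin n → R ⧸ J.integralClosureIdeal)) := by
  intro n hn
  obtain ⟨m, rfl⟩ : ∃ m, n = m + 1 := ⟨n - 1, by omega⟩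
  have hm : m + 1 - 1 = m := rfl
  rw [hm]
  subst hJ
  -- extract regularity
  have hw := hreg.toIsWeaklyRegular
  rw [RingTheory.Sequence.isWeaklyRegular_cons_iff] at hw
  obtain ⟨ha', hw2⟩ := hw
  rw [RingTheory.Sequence.isWeaklyRegular_cons_iff] at hw2
  obtain ⟨hb', -⟩ := hw2
  have ha : ∀ x : R, a * x = 0 → x = 0 := by
    intro x hx
    exact ha' (show a • x = a • 0 by simpa [smul_eq_mul] using hx)
  have hspan : (Ideal.span {a} : Submodule R R) = a • (⊤ : Submodule R R) := by
    rw [← Submodule.ideal_span_singleton_smul, Ideal.smul_eq_mul, Ideal.mul_top]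
  have hb : ∀ x : R, b * x ∈ Ideal.span {a} → x ∈ Ideal.span {a} := by
    intro x hx
    have h0 : b • (Submodule.Quotient.mk x : QuotSMulTop a R)
        = b • (Submodule.Quotient.mk (0 : R)) := by
      rw [← Submodule.Quotient.mk_smul, ← Submodule.Quotient.mk_smul]
      rw [Submodule.Quotient.eq]
      rw [← hspan]
      simpa [smul_eq_mul] using hx
    have := hb' h0
    rw [Submodule.Quotient.eq] at this
    rw [← hspan] at this
    simpa using this
  have hJIbar : Ideal.span ({a, b} : Set R) ≤ (Ideal.span {a, b}).integralClosureIdeal :=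
    fun x hx => mem_integralClosureIdeal_of_mem _ hx
  exact aux_iso a b ha hb _ hJIbar m
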